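/- Let n ≥ 2, (c_0, c_1, c_2) ∈ Z_4 × Z_{2n} × Z_{2n²}, and suppose x, x' ∈ C_n(c_0,c_1,c_2) and d_1, e_1, d_2, e_2 ∈ {1,…,n} with d_1 ≠ e_1, d_2 ≠ e_2, and E(x, d_1, e_1) = E(x', d_2, e_2). If e_1 < d_1 ≤ d_2 and e_2 < d_1 ≤ d_2 (Case (i)), then x = x'. -/

import Mathlib

/-- The bit of `x` at 1-based position `p` (junk value `0` out of range). -/
def getBit {n : ℕ} (x : Fin n → Fin 2) (p : ℕ) : Fin 2 :=
  if h : p - 1 < n then x ⟨p - 1, h⟩ else 0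

/-- Hamming weight of a binary sequence. -/
def wt {n : ℕ} (x : Fin n → Fin 2) : ℕ := ∑ i, (x i : ℕ)

/-- The `j`-th order VT syndrome `f_j(x) = Σ_{i=1}^n (Σ_{ℓ=1}^i ℓ^{j-1}) x_i`. -/
def vtSyn {n : ℕ} (j : ℕ) (x : Fin n → Fin 2) : ℕ :=
  ∑ i : Fin n, (∑ l ∈ Finset.Icc 1 ((i : ℕ) + 1), l ^ (j - 1)) * (x i : ℕ)

/-- Substitute the symbol at 1-based position `e` of `x` with its complement. -/
def substAt {n : ℕ} (x : Fin n → Fin 2) (e : ℕ) : Fin n → Fin 2 :=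
  fun i => if (i : ℕ) + 1 = e then 1 - x i else x i

/-- Delete the symbol at 1-based position `d` of `x`. -/
def delAt {n : ℕ} (x : Fin n → Fin 2) (d : ℕ) : Fin (n - 1) → Fin 2 :=
  fun i => if (i : ℕ) + 1 < d then getBit x ((i : ℕ) + 1) else getBit x ((i : ℕ) + 2)

/-- `E(x,d,e)`: delete the symbol at position `d` and substitute the symbol at
position `e` of `x` (positions are 1-based, taken in the original `x`). -/
def delSub {n : ℕ} (x : Fin n → Fin 2) (d e : ℕ) : Fin (n - 1) → Fin 2 :=
  delAt (substAt x e) d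

/-- The single-deletion single-substitution error ball `B_{1,1}(x)`. -/
def ball {n : ℕ} (x : Fin n → Fin 2) : Set (Fin (n - 1) → Fin 2) :=
  {y | (∃ d ∈ Finset.Icc 1 n, y = delAt x d) ∨
       ∃ d ∈ Finset.Icc 1 n, ∃ e ∈ Finset.Icc 1 n, d ≠ e ∧ y = delSub x d e}

/-- The code `C_n(c0,c1,c2)`. -/
def codeC (n : ℕ) (c0 c1 c2 : ℕ) : Finset (Fin n → Fin 2) :=
  Finset.univ.filter fun x =>
    x ≠ (fun _ => 0) ∧ x ≠ (fun _ => 1) ∧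
    wt x % 4 = c0 ∧ vtSyn 1 x % (2 * n) = c1 ∧ vtSyn 2 x % (2 * n ^ 2) = c2

/-- `u_i = Σ_{ℓ=i}^n x_ℓ − Σ_{ℓ=i}^n x'_ℓ` (1-based positions, value in `ℤ`). -/
def uSeq {n : ℕ} (x x' : Fin n → Fin 2) (i : ℕ) : ℤ :=
  (∑ l ∈ Finset.Icc i n, ((getBit x l : ℕ) : ℤ)) -
    ∑ l ∈ Finset.Icc i n, ((getBit x' l : ℕ) : ℤ)

open Finset

/-- Auxiliary weight function: `vfAux j p = Σ_{ℓ=1}^p ℓ^j` over `ℤ`. -/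
def vfAux (j p : ℕ) : ℤ := ∑ l ∈ Ioc 0 p, (l : ℤ) ^ j

lemma vfAux_diff (j a b : ℕ) (h : a ≤ b) :
    vfAux j b - vfAux j a = ∑ l ∈ Ioc a b, (l:ℤ)^j := by
  rw [vfAux, vfAux, ← Finset.sum_Ioc_consecutive _ (Nat.zero_le a) h]; ring

lemma vfAux_incr (j q : ℕ) (h : 1 ≤ q) : vfAux j q - vfAux j (q-1) = (q:ℤ)^j := by
  rw [vfAux_diff j (q-1) q (by omega)]
  have : Ioc (q-1) q = {q} := by ext m; simp only [Finset.mem_Ioc, Finset.mem_singleton]; omega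
  rw [this, Finset.sum_singleton]

lemma vfAux_id (p : ℕ) : vfAux 0 p = (p:ℤ) := by
  simp [vfAux, Nat.card_Ioc]

lemma vfAux_one_mul_two (p : ℕ) : vfAux 1 p * 2 = (p:ℤ) * (p+1) := by
  induction p with
  | zero => simp [vfAux]
  | succ m ih =>
    have h := vfAux_incr 1 (m+1) (by omega)
    simp only [Nat.add_sub_cancel] at h
    have : vfAux 1 (m+1) = vfAux 1 m + ((m:ℤ)+1)^1 := by push_cast at h ⊢; linarith
    rw [this]; push_cast; push_cast at ih; linarith

lemma vfAux_mono (j a b : ℕ) (h : a ≤ b) : vfAux j a ≤ vfAux j b := by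
  have h1 := vfAux_diff j a b h
  have h2 : (0:ℤ) ≤ ∑ l ∈ Ioc a b, (l:ℤ)^j :=
    Finset.sum_nonneg fun l _ => by positivity
  linarith

lemma vfAux1_diff_le (a b : ℕ) (h : a ≤ b) :
    vfAux 1 b - vfAux 1 a ≤ (b:ℤ) * ((b:ℤ) - (a:ℤ)) := by
  rw [vfAux_diff 1 a b h]
  have h1 := Finset.sum_le_card_nsmul (Ioc a b) (fun l => (l:ℤ)^1) (b:ℤ)
    (fun l hl => by simp only [Finset.mem_Ioc] at hl; simp only [pow_one]; exact_mod_cast hl.2)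
  rw [Nat.card_Ioc] at h1
  simp only [nsmul_eq_mul] at h1
  calc _ ≤ ((b-a:ℕ):ℤ) * b := h1
    _ = (b:ℤ)*((b:ℤ)-a) := by push_cast [h]; ring

lemma getBit_succ {n : ℕ} (x : Fin n → Fin 2) (i : ℕ) (hi : i < n) :
    getBit x (i+1) = x ⟨i, hi⟩ := by
  simp [getBit, Nat.add_sub_cancel, hi]

lemma sum_Ioc_eq_range (F : ℕ → ℤ) (n : ℕ) :
    ∑ p ∈ Ioc 0 n, F p = ∑ i ∈ range n, F (i+1) := by
  induction n with
  | zero => simp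
  | succ m ih => rw [Finset.sum_range_succ, ← ih, ← Finset.sum_Ioc_succ_top (Nat.zero_le m)]

lemma vtSyn_cast {n : ℕ} (j : ℕ) (x : Fin n → Fin 2) :
    (vtSyn j x : ℤ) = ∑ p ∈ Ioc 0 n, vfAux (j-1) p * ((getBit x p : ℕ) : ℤ) := by
  rw [sum_Ioc_eq_range, vtSyn]
  push_cast
  rw [← Fin.sum_univ_eq_sum_range (fun i => vfAux (j-1) (i+1) * ((getBit x (i+1) : ℕ) : ℤ)) n]
  refine Finset.sum_congr rfl fun i _ => ?_
  rw [getBit_succ x i i.isLt, Fin.eta, vfAux, ← Finset.Icc_add_one_left_eq_Ioc, zero_add]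

lemma wt_cast {n : ℕ} (x : Fin n → Fin 2) :
    (wt x : ℤ) = ∑ p ∈ Ioc 0 n, ((getBit x p : ℕ) : ℤ) := by
  rw [sum_Ioc_eq_range, wt]
  push_cast
  rw [← Fin.sum_univ_eq_sum_range (fun i => ((getBit x (i+1) : ℕ) : ℤ)) n]
  exact Finset.sum_congr rfl fun i _ => by rw [getBit_succ x i i.isLt, Fin.eta]

lemma key_sum (n d1 d2 e1 e2 : ℕ) (X X' : ℕ → ℤ) (v : ℕ → ℤ)
    (hd1 : 1 ≤ d1) (hd12 : d1 ≤ d2) (hd2n : d2 ≤ n)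
    (he1a : 1 ≤ e1) (he1b : e1 < d1) (he2a : 1 ≤ e2) (he2b : e2 < d1)
    (hR1 : ∀ p, 0 < p → p < d1 → p ≠ e1 → p ≠ e2 → X p = X' p)
    (hR4 : ∀ p, d1 ≤ p → p < d2 → X' p = X (p+1))
    (hR5 : ∀ p, d2 < p → p ≤ n → X p = X' p) :
    ∑ p ∈ Ioc 0 n, v p * (X p - X' p)
      = (∑ p ∈ ({e1, e2} : Finset ℕ), v p * (X p - X' p))
        + (v d1 * X d1 - v d2 * X' d2)
        + ∑ q ∈ Ioc d1 d2, (v q - v (q-1)) * X q := by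
  set f : ℕ → ℤ := fun p => v p * (X p - X' p) with hf
  have split1 : ∑ p ∈ Ioc 0 (d1-1), f p + ∑ p ∈ Ioc (d1-1) d2, f p = ∑ p ∈ Ioc 0 d2, f p :=
    Finset.sum_Ioc_consecutive f (Nat.zero_le _) (by omega)
  have split2 : ∑ p ∈ Ioc 0 d2, f p + ∑ p ∈ Ioc d2 n, f p = ∑ p ∈ Ioc 0 n, f p :=
    Finset.sum_Ioc_consecutive f (by omega) hd2n
  have hC : ∑ p ∈ Ioc d2 n, f p = 0 := by
    refine Finset.sum_eq_zero fun p hp => ?_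
    simp only [Finset.mem_Ioc] at hp
    simp [hf, hR5 p hp.1 hp.2]
  have hA : ∑ p ∈ Ioc 0 (d1-1), f p = ∑ p ∈ ({e1, e2} : Finset ℕ), f p := by
    refine (Finset.sum_subset ?_ ?_).symm
    · intro p hp
      simp only [Finset.mem_insert, Finset.mem_singleton] at hp
      simp only [Finset.mem_Ioc]
      rcases hp with rfl | rfl <;> omega
    · intro p hp hnp
      simp only [Finset.mem_Ioc] at hp
      simp only [Finset.mem_insert, Finset.mem_singleton, not_or] at hnp
      simp [hf, hR1 p (by omega) (by omega) hnp.1 hnp.2]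
  have hB : ∑ p ∈ Ioc (d1-1) d2, f p
      = (v d1 * X d1 - v d2 * X' d2) + ∑ q ∈ Ioc d1 d2, (v q - v (q-1)) * X q := by
    have hsub : ∑ p ∈ Ioc (d1-1) d2, f p
        = ∑ p ∈ Ioc (d1-1) d2, v p * X p - ∑ p ∈ Ioc (d1-1) d2, v p * X' p := by
      rw [← Finset.sum_sub_distrib]; exact Finset.sum_congr rfl fun p _ => by ring
    have hi1 : Ioc (d1-1) d2 = insert d1 (Ioc d1 d2) := by
      ext p; simp only [Finset.mem_Ioc, Finset.mem_insert]; omega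
    have hi2 : Ioc (d1-1) d2 = insert d2 (Ioo (d1-1) d2) := by
      ext p; simp only [Finset.mem_Ioc, Finset.mem_insert, Finset.mem_Ioo]; omega
    have hx1 : ∑ p ∈ Ioc (d1-1) d2, v p * X p = v d1 * X d1 + ∑ q ∈ Ioc d1 d2, v q * X q := by
      rw [hi1, Finset.sum_insert (by simp)]
    have hx2 : ∑ p ∈ Ioc (d1-1) d2, v p * X' p
        = v d2 * X' d2 + ∑ q ∈ Ioc d1 d2, v (q-1) * X q := by
      rw [hi2, Finset.sum_insert (by simp)]
      congr 1
      refine Finset.sum_nbij' (fun p => p + 1) (fun q => q - 1) ?_ ?_ ?_ ?_ ?_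
      · intro p hp; simp only [Finset.mem_Ioo] at hp; simp only [Finset.mem_Ioc]; omega
      · intro q hq; simp only [Finset.mem_Ioc] at hq; simp only [Finset.mem_Ioo]; omega
      · intro p _; omega
      · intro q hq; simp only [Finset.mem_Ioc] at hq; omega
      · intro p hp
        simp only [Finset.mem_Ioo] at hp
        rw [hR4 p (by omega) hp.2, Nat.add_sub_cancel]
    rw [hsub, hx1, hx2]
    have : ∑ q ∈ Ioc d1 d2, (v q - v (q-1)) * X q
        = ∑ q ∈ Ioc d1 d2, v q * X q - ∑ q ∈ Ioc d1 d2, v (q-1) * X q := by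
      rw [← Finset.sum_sub_distrib]; exact Finset.sum_congr rfl fun q _ => by ring
    rw [this]; ring
  linarith [split1, split2, hA, hB, hC]

lemma getBit_substAt {n : ℕ} (x : Fin n → Fin 2) (e q : ℕ) (h1 : 1 ≤ q) (h2 : q ≤ n) :
    getBit (substAt x e) q = if q = e then 1 - getBit x q else getBit x q := by
  have hq : q - 1 < n := by omega
  have hq1 : q - 1 + 1 = q := by omega
  simp only [getBit, substAt, dif_pos hq, hq1]

lemma delSub_eval {n : ℕ} (x : Fin n → Fin 2) (d e p : ℕ) (hdn : d ≤ n) (hed : e < d)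
    (hp1 : 1 ≤ p) (hpn : p ≤ n - 1) (hidx : p - 1 < n - 1) :
    delSub x d e ⟨p-1, hidx⟩
      = if p < d then (if p = e then 1 - getBit x p else getBit x p) else getBit x (p+1) := by
  have hp : p - 1 + 1 = p := by omega
  have hp2 : p - 1 + 2 = p + 1 := by omega
  simp only [delSub, delAt, hp, hp2]
  by_cases hpd : p < d
  · rw [if_pos hpd, if_pos hpd, getBit_substAt x e p (by omega) (by omega)]
  · rw [if_neg hpd, if_neg hpd, getBit_substAt x e (p+1) (by omega) (by omega),
      if_neg (by omega)]

set_option maxHeartbeats 1000000 in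
/-- Case (i): e1 < d1 ≤ d2 and e2 < d1 ≤ d2 implies x = x'. -/
theorem stmt10 (n : ℕ) (hn : 2 ≤ n) (c0 c1 c2 : ℕ)
    (hc0 : c0 < 4) (hc1 : c1 < 2 * n) (hc2 : c2 < 2 * n ^ 2)
    (x x' : Fin n → Fin 2)
    (hx : x ∈ codeC n c0 c1 c2) (hx' : x' ∈ codeC n c0 c1 c2)
    (d1 e1 d2 e2 : ℕ)
    (hd1 : d1 ∈ Finset.Icc 1 n) (he1 : e1 ∈ Finset.Icc 1 n)
    (hd2 : d2 ∈ Finset.Icc 1 n) (he2 : e2 ∈ Finset.Icc 1 n)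
    (h1 : d1 ≠ e1) (h2 : d2 ≠ e2)
    (hE : delSub x d1 e1 = delSub x' d2 e2)
    (hcase : (e1 < d1 ∧ d1 ≤ d2) ∧ (e2 < d1 ∧ d1 ≤ d2)) :
    x = x' := by
  simp only [Finset.mem_Icc] at hd1 he1 hd2 he2
  obtain ⟨hd1a, hd1n⟩ := hd1
  obtain ⟨he1a, he1n⟩ := he1
  obtain ⟨hd2a, hd2n⟩ := hd2
  obtain ⟨he2a, he2n⟩ := he2
  obtain ⟨⟨he1d, hdd⟩, he2d, -⟩ := hcase
  simp only [codeC, Finset.mem_filter, Finset.mem_univ, true_and] at hx hx'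
  obtain ⟨-, -, hw, hs1, hs2⟩ := hx
  obtain ⟨-, -, hw', hs1', hs2'⟩ := hx'
  -- integer bit sequences
  set X : ℕ → ℤ := fun p => ((getBit x p : ℕ) : ℤ) with hXdef
  set X' : ℕ → ℤ := fun p => ((getBit x' p : ℕ) : ℤ) with hX'def
  have hX01 : ∀ p, X p = 0 ∨ X p = 1 := by
    intro p; have : ((getBit x p : ℕ)) ≤ 1 := Fin.is_le _
    simp only [hXdef]; omega
  have hX01' : ∀ p, X' p = 0 ∨ X' p = 1 := by
    intro p; have : ((getBit x' p : ℕ)) ≤ 1 := Fin.is_le _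
    simp only [hX'def]; omega
  have hflip : ∀ a : Fin 2, (((1 - a : Fin 2) : ℕ) : ℤ) = 1 - ((a : ℕ) : ℤ) := by decide
  have hinj : ∀ a b : Fin 2, 1 - a = 1 - b → a = b := by decide
  -- pointwise consequence of hE
  have hEp : ∀ p, 1 ≤ p → p ≤ n - 1 →
      (if p < d1 then (if p = e1 then 1 - getBit x p else getBit x p) else getBit x (p+1))
      = (if p < d2 then (if p = e2 then 1 - getBit x' p else getBit x' p)
          else getBit x' (p+1)) := by
    intro p hp1 hpn
    have hidx : p - 1 < n - 1 := by omega
    have h := congrFun hE ⟨p-1, hidx⟩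
    rwa [delSub_eval x d1 e1 p hd1n he1d hp1 hpn hidx,
      delSub_eval x' d2 e2 p hd2n (lt_of_lt_of_le he2d hdd) hp1 hpn hidx] at h
  have hR1 : ∀ p, 0 < p → p < d1 → p ≠ e1 → p ≠ e2 → X p = X' p := by
    intro p h0 hpd hne1 hne2
    have h := hEp p (by omega) (by omega)
    rw [if_pos hpd, if_pos (lt_of_lt_of_le hpd hdd), if_neg hne1, if_neg hne2] at h
    simp only [hXdef, hX'def, h]
  have hR4 : ∀ p, d1 ≤ p → p < d2 → X' p = X (p+1) := by
    intro p hpd hpd2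
    have h := hEp p (by omega) (by omega)
    rw [if_neg (by omega), if_pos hpd2, if_neg (by omega)] at h
    simp only [hXdef, hX'def, h]
  have hR5 : ∀ p, d2 < p → p ≤ n → X p = X' p := by
    intro p hpd hpn
    have h := hEp (p-1) (by omega) (by omega)
    rw [if_neg (by omega), if_neg (by omega)] at h
    have hp : p - 1 + 1 = p := by omega
    rw [hp] at h
    simp only [hXdef, hX'def, h]
  -- syndrome difference identities
  have hDW : (wt x : ℤ) - (wt x' : ℤ) = ∑ p ∈ Ioc 0 n, (fun _ => (1:ℤ)) p * (X p - X' p) := by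
    rw [wt_cast, wt_cast, ← Finset.sum_sub_distrib]
    exact Finset.sum_congr rfl fun p _ => by simp [hXdef, hX'def]
  have hD1 : (vtSyn 1 x : ℤ) - (vtSyn 1 x' : ℤ)
      = ∑ p ∈ Ioc 0 n, vfAux 0 p * (X p - X' p) := by
    rw [vtSyn_cast, vtSyn_cast, ← Finset.sum_sub_distrib]
    exact Finset.sum_congr rfl fun p _ => by simp only [hXdef, hX'def]; ring
  have hD2 : (vtSyn 2 x : ℤ) - (vtSyn 2 x' : ℤ)
      = ∑ p ∈ Ioc 0 n, vfAux 1 p * (X p - X' p) := by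
    rw [vtSyn_cast, vtSyn_cast, ← Finset.sum_sub_distrib]
    exact Finset.sum_congr rfl fun p _ => by simp only [hXdef, hX'def]; ring
  -- key sums
  have hK0 := key_sum n d1 d2 e1 e2 X X' (fun _ => (1:ℤ)) hd1a hdd hd2n
    he1a he1d he2a he2d hR1 hR4 hR5
  have hK1 := key_sum n d1 d2 e1 e2 X X' (vfAux 0) hd1a hdd hd2n
    he1a he1d he2a he2d hR1 hR4 hR5
  have hK2 := key_sum n d1 d2 e1 e2 X X' (vfAux 1) hd1a hdd hd2n
    he1a he1d he2a he2d hR1 hR4 hR5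
  -- simplify increment sums
  have hz0 : ∑ q ∈ Ioc d1 d2, ((fun _ => (1:ℤ)) q - (fun _ => (1:ℤ)) (q-1)) * X q = 0 :=
    Finset.sum_eq_zero fun q _ => by ring
  set S : ℤ := ∑ q ∈ Ioc d1 d2, X q with hSdef
  set S2 : ℤ := ∑ q ∈ Ioc d1 d2, (q:ℤ) * X q with hS2def
  have hz1 : ∑ q ∈ Ioc d1 d2, (vfAux 0 q - vfAux 0 (q-1)) * X q = S := by
    rw [hSdef]
    refine Finset.sum_congr rfl fun q hq => ?_
    simp only [Finset.mem_Ioc] at hq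
    rw [vfAux_incr 0 q (by omega)]; ring
  have hz2 : ∑ q ∈ Ioc d1 d2, (vfAux 1 q - vfAux 1 (q-1)) * X q = S2 := by
    rw [hS2def]
    refine Finset.sum_congr rfl fun q hq => ?_
    simp only [Finset.mem_Ioc] at hq
    rw [vfAux_incr 1 q (by omega)]; ring
  rw [hz0, add_zero] at hK0
  rw [hz1] at hK1
  rw [hz2] at hK2
  -- divisibility
  have hdvd0 : (4:ℤ) ∣ (wt x : ℤ) - (wt x' : ℤ) := by
    have hmod : wt x' ≡ wt x [MOD 4] := (hw'.trans hw.symm : _)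
    exact_mod_cast hmod.dvd
  have hdvd1 : (2 * (n:ℤ)) ∣ (vtSyn 1 x : ℤ) - (vtSyn 1 x' : ℤ) := by
    have hmod : vtSyn 1 x' ≡ vtSyn 1 x [MOD 2*n] := (hs1'.trans hs1.symm : _)
    have := hmod.dvd
    push_cast at this ⊢
    exact this
  have hdvd2 : (2 * (n:ℤ)^2) ∣ (vtSyn 2 x : ℤ) - (vtSyn 2 x' : ℤ) := by
    have hmod : vtSyn 2 x' ≡ vtSyn 2 x [MOD 2*n^2] := (hs2'.trans hs2.symm : _)
    have := hmod.dvd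
    push_cast at this ⊢
    exact this
  -- bounds on S and S2
  have hXnn : ∀ q, (0:ℤ) ≤ X q := fun q => by rcases hX01 q with h | h <;> omega
  have hXle : ∀ q, X q ≤ 1 := fun q => by rcases hX01 q with h | h <;> omega
  have hS_nonneg : 0 ≤ S := Finset.sum_nonneg fun q _ => hXnn q
  have hS_le : S ≤ (d2:ℤ) - (d1:ℤ) := by
    have h := Finset.sum_le_card_nsmul (Ioc d1 d2) X 1 (fun q _ => hXle q)
    rw [Nat.card_Ioc] at h
    simp only [nsmul_eq_mul, mul_one] at h
    calc S ≤ ((d2 - d1 : ℕ):ℤ) := h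
      _ = (d2:ℤ) - d1 := by push_cast [hdd]; ring
  have hS2_nonneg : 0 ≤ S2 :=
    Finset.sum_nonneg fun q hq => mul_nonneg (by positivity) (hXnn q)
  have hS2_le : S2 ≤ vfAux 1 d2 - vfAux 1 d1 := by
    rw [vfAux_diff 1 d1 d2 hdd]
    refine Finset.sum_le_sum fun q _ => ?_
    have hq0 : (0:ℤ) ≤ (q:ℤ) := by positivity
    calc (q:ℤ) * X q ≤ (q:ℤ) * 1 := mul_le_mul_of_nonneg_left (hXle q) hq0
      _ = (q:ℤ)^1 := by ring
  have hS2_low : ((d1:ℤ)+1) * S ≤ S2 := by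
    rw [hSdef, hS2def, Finset.mul_sum]
    refine Finset.sum_le_sum fun q hq => ?_
    simp only [Finset.mem_Ioc] at hq
    have hq1 : (d1:ℤ)+1 ≤ (q:ℤ) := by exact_mod_cast hq.1
    exact mul_le_mul_of_nonneg_right hq1 (hXnn q)
  -- casts of basic inequalities
  have hc_e1 : (e1:ℤ) < (d1:ℤ) := by exact_mod_cast he1d
  have hc_e2 : (e2:ℤ) < (d1:ℤ) := by exact_mod_cast he2d
  have hc_dd : (d1:ℤ) ≤ (d2:ℤ) := by exact_mod_cast hdd
  have hc_d2n : (d2:ℤ) ≤ (n:ℤ) := by exact_mod_cast hd2n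
  have hc_d1a : (1:ℤ) ≤ (d1:ℤ) := by exact_mod_cast hd1a
  have hc_e1a : (1:ℤ) ≤ (e1:ℤ) := by exact_mod_cast he1a
  have hc_e2a : (1:ℤ) ≤ (e2:ℤ) := by exact_mod_cast he2a
  have hc_n : (2:ℤ) ≤ (n:ℤ) := by exact_mod_cast hn
  -- vfAux 1 facts
  have hv1_one : vfAux 1 1 = 1 := by
    have h01 : Ioc 0 1 = ({1} : Finset ℕ) := by
      ext m; simp only [Finset.mem_Ioc, Finset.mem_singleton]; omega
    rw [vfAux, h01, Finset.sum_singleton]; norm_num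
  have hv_e1 : 1 ≤ vfAux 1 e1 := hv1_one ▸ vfAux_mono 1 1 e1 he1a
  have hv_e2 : 1 ≤ vfAux 1 e2 := hv1_one ▸ vfAux_mono 1 1 e2 he2a
  have hv_d1 : 1 ≤ vfAux 1 d1 := hv1_one ▸ vfAux_mono 1 1 d1 hd1a
  have hv_e1n : vfAux 1 e1 ≤ vfAux 1 n := vfAux_mono 1 e1 n he1n
  have hv_e2n : vfAux 1 e2 ≤ vfAux 1 n := vfAux_mono 1 e2 n he2n
  have hv_d2n : vfAux 1 d2 ≤ vfAux 1 n := vfAux_mono 1 d2 n hd2n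
  have hv_dd : vfAux 1 d1 ≤ vfAux 1 d2 := vfAux_mono 1 d1 d2 hdd
  have hv_n2 : vfAux 1 n * 2 = (n:ℤ) * ((n:ℤ)+1) := by
    have := vfAux_one_mul_two n; push_cast at this; exact this

  -- beta-reduce hK0, rewrite vfAux 0 as identity in hK1
  simp only [one_mul] at hK0 hDW
  simp only [vfAux_id] at hK1 hD1
  -- case split on e1 = e2
  by_cases heq : e1 = e2
  · -- CASE e1 = e2 : prove x = x'
    subst heq
    have hpair : ({e1, e1} : Finset ℕ) = {e1} := by simp
    rw [hpair, Finset.sum_singleton] at hK0 hK1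
    -- at position e1 both are flipped, hence equal
    have hRe : X e1 = X' e1 := by
      have h := hEp e1 (by omega) (by omega)
      rw [if_pos he1d, if_pos (lt_of_lt_of_le he1d hdd), if_pos rfl, if_pos rfl] at h
      have := hinj _ _ h
      simp only [hXdef, hX'def, this]
    rw [hRe] at hK0 hK1
    simp only [sub_self, mul_zero, zero_add] at hK0 hK1
    -- weight difference gives X d1 = X' d2
    have hDd : X d1 = X' d2 := by
      have h := hdvd0
      rw [hDW, hK0] at h
      rcases hX01 d1 with h0 | h0 <;> rcases hX01' d2 with h0' | h0' <;> omega
    -- first syndrome gives the value of S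
    have hSval : ((d1:ℤ) - (d2:ℤ)) * X d1 + S = 0 := by
      have h := hdvd1
      rw [hD1, hK1] at h
      have heq2 : (d1:ℤ) * X d1 - (d2:ℤ) * X' d2 + S = ((d1:ℤ) - (d2:ℤ)) * X d1 + S := by
        rw [← hDd]; ring
      rw [heq2] at h
      refine Int.eq_zero_of_abs_lt_dvd h ?_
      rcases hX01 d1 with h0 | h0 <;> rw [h0] <;>
        rw [abs_lt] <;> constructor <;>
        linarith only [hS_nonneg, hS_le, hc_dd, hc_d2n, hc_d1a, hc_n]
    -- the block [d1, d2] is constant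
    have hconst : ∀ q, d1 < q → q ≤ d2 → X q = X d1 := by
      rcases hX01 d1 with h0 | h0
      · -- S = 0, all zero
        have hS0 : S = 0 := by rw [h0] at hSval; linarith only [hSval]
        intro q hq1 hq2
        have := (Finset.sum_eq_zero_iff_of_nonneg (fun q _ => hXnn q)).mp (hSdef ▸ hS0) q
          (Finset.mem_Ioc.mpr ⟨hq1, hq2⟩)
        rw [this, h0]
      · -- S = d2 - d1, all one
        have hSfull : S = (d2:ℤ) - d1 := by rw [h0] at hSval; linarith only [hSval]
        have hZ : ∑ q ∈ Ioc d1 d2, (1 - X q) = 0 := by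
          rw [Finset.sum_sub_distrib, Finset.sum_const, Nat.card_Ioc, nsmul_eq_mul, mul_one,
            ← hSdef, hSfull]
          push_cast [hdd]; ring
        intro q hq1 hq2
        have := (Finset.sum_eq_zero_iff_of_nonneg (fun q _ => by linarith only [hXle q])).mp hZ q
          (Finset.mem_Ioc.mpr ⟨hq1, hq2⟩)
        rw [h0]; linarith only [this]
    have hXc : ∀ p, d1 ≤ p → p ≤ d2 → X p = X d1 := by
      intro p h h2
      rcases eq_or_lt_of_le h with rfl | h
      · rfl
      · exact hconst p h h2
    have hall : ∀ p, 1 ≤ p → p ≤ n → X p = X' p := by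
      intro p hp1 hpn
      rcases lt_or_ge p d1 with h | h
      · by_cases hpe : p = e1
        · subst hpe; exact hRe
        · exact hR1 p (by omega) h hpe hpe
      · rcases lt_or_ge p d2 with h2 | h2
        · rw [hR4 p h h2, hXc p h (by omega), hXc (p+1) (by omega) (by omega)]
        · rcases eq_or_lt_of_le h2 with rfl | h3
          · rw [← hDd]; exact hXc d2 h le_rfl
          · exact hR5 p h3 hpn
    funext i
    have h := hall ((i:ℕ)+1) (by omega) (by omega)
    have hfin : getBit x ((i:ℕ)+1) = getBit x' ((i:ℕ)+1) := by
      simp only [hXdef, hX'def, Nat.cast_inj] at h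
      exact Fin.val_injective h
    rwa [getBit_succ x i i.isLt, getBit_succ x' i i.isLt, Fin.eta] at hfin
  · -- CASE e1 ≠ e2 : contradiction
    exfalso
    have hne_int : (e1:ℤ) ≠ (e2:ℤ) := fun h => heq (by exact_mod_cast h)
    have hRe1 : X' e1 = 1 - X e1 := by
      have h := hEp e1 (by omega) (by omega)
      rw [if_pos he1d, if_pos (lt_of_lt_of_le he1d hdd), if_pos rfl, if_neg heq] at h
      simp only [hXdef, hX'def, ← h, hflip]
    have hRe2 : X e2 = 1 - X' e2 := by
      have h := hEp e2 (by omega) (by omega)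
      rw [if_pos he2d, if_pos (lt_of_lt_of_le he2d hdd),
        if_neg (fun hh => heq hh.symm), if_pos rfl] at h
      simp only [hXdef, hX'def, h, hflip]
    rw [Finset.sum_pair heq] at hK0 hK1 hK2
    -- weight difference mod 4
    have hW : (X e1 - X' e1) + (X e2 - X' e2) + (X d1 - X' d2)
        = (wt x : ℤ) - (wt x' : ℤ) := by rw [hDW, hK0]
    have hae : X e1 = X' e2 ∧ X d1 = X' d2 := by
      have h := hdvd0
      rw [← hW, hRe1, hRe2] at h
      rcases hX01 e1 with h0 | h0 <;> rw [h0] at h <;>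
        rcases hX01' e2 with h1 | h1 <;> rw [h1] at h <;>
        rcases hX01 d1 with h2 | h2 <;> rw [h2] at h <;>
        rcases hX01' d2 with h3 | h3 <;> rw [h3] at h <;>
        first
          | (constructor <;> omega)
          | omega
    obtain ⟨haeq, hDd⟩ := hae
    set a : ℤ := X e1 with hadef
    have hXe2 : X e2 = 1 - a := by rw [hRe2, ← haeq]
    have hX'e1 : X' e1 = 1 - a := hRe1
    have hX'e2 : X' e2 = a := haeq.symm
    have ha01 : a = 0 ∨ a = 1 := hX01 e1
    -- first syndrome equation
    have hE1 : (2*a - 1) * ((e1:ℤ) - (e2:ℤ)) + ((d1:ℤ) - (d2:ℤ)) * X d1 + S = 0 := by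
      have h := hdvd1
      rw [hD1, hK1] at h
      have heq2 : (e1:ℤ) * (X e1 - X' e1) + (e2:ℤ) * (X e2 - X' e2)
            + ((d1:ℤ) * X d1 - (d2:ℤ) * X' d2) + S
          = (2*a - 1) * ((e1:ℤ) - (e2:ℤ)) + ((d1:ℤ) - (d2:ℤ)) * X d1 + S := by
        rw [hX'e1, hXe2, hX'e2, ← hDd, ← hadef]; ring
      rw [heq2] at h
      refine Int.eq_zero_of_abs_lt_dvd h ?_
      rcases ha01 with h0 | h0 <;> rw [h0] <;>
        rcases hX01 d1 with h2 | h2 <;> rw [h2] <;>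
        rw [abs_lt] <;> constructor <;>
        linarith only [hS_nonneg, hS_le, hc_e1, hc_e2, hc_e1a, hc_e2a, hc_dd,
          hc_d2n, hc_d1a, hc_n]
    -- second syndrome equation
    have hE2 : (2*a - 1) * (vfAux 1 e1 - vfAux 1 e2)
        + (vfAux 1 d1 - vfAux 1 d2) * X d1 + S2 = 0 := by
      have h := hdvd2
      rw [hD2, hK2] at h
      have heq2 : vfAux 1 e1 * (X e1 - X' e1) + vfAux 1 e2 * (X e2 - X' e2)
            + (vfAux 1 d1 * X d1 - vfAux 1 d2 * X' d2) + S2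
          = (2*a - 1) * (vfAux 1 e1 - vfAux 1 e2)
            + (vfAux 1 d1 - vfAux 1 d2) * X d1 + S2 := by
        rw [hX'e1, hXe2, hX'e2, ← hDd, ← hadef]; ring
      rw [heq2] at h
      have hnn : (n:ℤ)*((n:ℤ)+1) ≤ 2*(n:ℤ)^2 := by
        have h' : (0:ℤ) ≤ ((n:ℤ)-1)*(n:ℤ) :=
          mul_nonneg (by linarith only [hc_n]) (by linarith only [hc_n])
        linarith only [h']
      refine Int.eq_zero_of_abs_lt_dvd h ?_
      rcases ha01 with h0 | h0 <;> rw [h0] <;>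
        rcases hX01 d1 with h2 | h2 <;> rw [h2] <;>
        rw [abs_lt] <;> constructor <;>
        linarith only [hS2_nonneg, hS2_le, hv_e1, hv_e2, hv_d1, hv_e1n, hv_e2n,
          hv_d2n, hv_dd, hnn, hv_n2, hc_n]
    -- derive the contradiction
    rcases hX01 d1 with hd0 | hd0
    · -- X d1 = 0
      rw [hd0, mul_zero, add_zero] at hE1 hE2
      rcases ha01 with h0 | h0
      · -- a = 0 : S = e1 - e2
        rw [h0] at hE1 hE2
        have hSeq : S = (e1:ℤ) - (e2:ℤ) := by linarith only [hE1]
        have hS1 : 1 ≤ S := by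
          rcases lt_or_ge (0:ℤ) S with h | h
          · omega
          · exfalso; have : S = 0 := le_antisymm h hS_nonneg
            rw [this] at hSeq; exact hne_int (by first | linarith only [hSeq] | linarith only [hZeq])
        have he21 : e2 ≤ e1 := by
          have : (e2:ℤ) ≤ (e1:ℤ) := by first | linarith only [hSeq, hS_nonneg] | linarith only [hZeq, hZ_nonneg]
          exact_mod_cast this
        have hle := vfAux1_diff_le e2 e1 he21
        have hS2eq : S2 = vfAux 1 e1 - vfAux 1 e2 := by linarith only [hE2]
        have h1 : S2 ≤ (e1:ℤ) * S := by rw [hS2eq, hSeq]; linarith only [hle]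
        have h2 : (e1:ℤ) * S ≤ ((d1:ℤ) - 1) * S :=
          mul_le_mul_of_nonneg_right (by linarith only [hc_e1, hc_e2]) hS_nonneg
        linarith only [hS2_low, h1, h2, hS1]
      · -- a = 1 : S = e2 - e1
        rw [h0] at hE1 hE2
        have hSeq : S = (e2:ℤ) - (e1:ℤ) := by linarith only [hE1]
        have hS1 : 1 ≤ S := by
          rcases lt_or_ge (0:ℤ) S with h | h
          · omega
          · exfalso; have : S = 0 := le_antisymm h hS_nonneg
            rw [this] at hSeq; exact hne_int (by first | linarith only [hSeq] | linarith only [hZeq])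
        have he12 : e1 ≤ e2 := by
          have : (e1:ℤ) ≤ (e2:ℤ) := by first | linarith only [hSeq, hS_nonneg] | linarith only [hZeq, hZ_nonneg]
          exact_mod_cast this
        have hle := vfAux1_diff_le e1 e2 he12
        have hS2eq : S2 = vfAux 1 e2 - vfAux 1 e1 := by linarith only [hE2]
        have h1 : S2 ≤ (e2:ℤ) * S := by rw [hS2eq, hSeq]; linarith only [hle]
        have h2 : (e2:ℤ) * S ≤ ((d1:ℤ) - 1) * S :=
          mul_le_mul_of_nonneg_right (by linarith only [hc_e1, hc_e2]) hS_nonneg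
        linarith only [hS2_low, h1, h2, hS1]
    · -- X d1 = 1
      rw [hd0, mul_one] at hE1 hE2
      set Z : ℤ := ((d2:ℤ) - (d1:ℤ)) - S with hZdef
      set Z2 : ℤ := (vfAux 1 d2 - vfAux 1 d1) - S2 with hZ2def
      have hZ_nonneg : 0 ≤ Z := by rw [hZdef]; linarith only [hS_le]
      have hZsum : Z = ∑ q ∈ Ioc d1 d2, (1 - X q) := by
        rw [Finset.sum_sub_distrib, Finset.sum_const, Nat.card_Ioc, nsmul_eq_mul, mul_one,
          ← hSdef, hZdef]
        push_cast [hdd]; ring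
      have hZ2sum : Z2 = ∑ q ∈ Ioc d1 d2, (q:ℤ) * (1 - X q) := by
        have hvd := vfAux_diff 1 d1 d2 hdd
        have : ∑ q ∈ Ioc d1 d2, (q:ℤ) * (1 - X q)
            = ∑ q ∈ Ioc d1 d2, (q:ℤ)^1 - ∑ q ∈ Ioc d1 d2, (q:ℤ) * X q := by
          rw [← Finset.sum_sub_distrib]
          exact Finset.sum_congr rfl fun q _ => by ring
        rw [this, ← hvd, ← hS2def, hZ2def]
      have hZ2_low : ((d1:ℤ)+1) * Z ≤ Z2 := by
        rw [hZsum, hZ2sum, Finset.mul_sum]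
        refine Finset.sum_le_sum fun q hq => ?_
        simp only [Finset.mem_Ioc] at hq
        have hq1 : (d1:ℤ)+1 ≤ (q:ℤ) := by exact_mod_cast hq.1
        exact mul_le_mul_of_nonneg_right hq1 (by linarith only [hXle q])
      rcases ha01 with h0 | h0
      · -- a = 0 : Z = e2 - e1
        rw [h0] at hE1 hE2
        have hZeq : Z = (e2:ℤ) - (e1:ℤ) := by rw [hZdef]; linarith only [hE1]
        have hZ1 : 1 ≤ Z := by
          rcases lt_or_ge (0:ℤ) Z with h | h
          · omega
          · exfalso; have : Z = 0 := le_antisymm h hZ_nonneg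
            rw [this] at hZeq; exact hne_int (by first | linarith only [hSeq] | linarith only [hZeq])
        have he12 : e1 ≤ e2 := by
          have : (e1:ℤ) ≤ (e2:ℤ) := by first | linarith only [hSeq, hS_nonneg] | linarith only [hZeq, hZ_nonneg]
          exact_mod_cast this
        have hle := vfAux1_diff_le e1 e2 he12
        have hZ2eq : Z2 = vfAux 1 e2 - vfAux 1 e1 := by rw [hZ2def]; linarith only [hE2]
        have h1 : Z2 ≤ (e2:ℤ) * Z := by rw [hZ2eq, hZeq]; linarith only [hle]
        have h2 : (e2:ℤ) * Z ≤ ((d1:ℤ) - 1) * Z :=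
          mul_le_mul_of_nonneg_right (by linarith only [hc_e1, hc_e2]) hZ_nonneg
        linarith only [hZ2_low, h1, h2, hZ1]
      · -- a = 1 : Z = e1 - e2
        rw [h0] at hE1 hE2
        have hZeq : Z = (e1:ℤ) - (e2:ℤ) := by rw [hZdef]; linarith only [hE1]
        have hZ1 : 1 ≤ Z := by
          rcases lt_or_ge (0:ℤ) Z with h | h
          · omega
          · exfalso; have : Z = 0 := le_antisymm h hZ_nonneg
            rw [this] at hZeq; exact hne_int (by first | linarith only [hSeq] | linarith only [hZeq])
        have he21 : e2 ≤ e1 := by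
          have : (e2:ℤ) ≤ (e1:ℤ) := by first | linarith only [hSeq, hS_nonneg] | linarith only [hZeq, hZ_nonneg]
          exact_mod_cast this
        have hle := vfAux1_diff_le e2 e1 he21
        have hZ2eq : Z2 = vfAux 1 e1 - vfAux 1 e2 := by rw [hZ2def]; linarith only [hE2]
        have h1 : Z2 ≤ (e1:ℤ) * Z := by rw [hZ2eq, hZeq]; linarith only [hle]
        have h2 : (e1:ℤ) * Z ≤ ((d1:ℤ) - 1) * Z :=
          mul_le_mul_of_nonneg_right (by linarith only [hc_e1, hc_e2]) hZ_nonneg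
        linarith only [hZ2_low, h1, h2, hZ1]
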